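/- arXiv:2601.20502 — 5 statements merged into one kernel-verified Lean document; each statement's English description precedes it below -/
import Mathlib

section
/- Let X, X', Y, Y' be real-valued random variables on a common probability space such that X is integrable, X' ≤ 0 almost surely, Y and Y' have the same distribution, and X + X' ≥ Y - Y' almost surely. Then E[X] ≥ 0, and if E[X] = 0 then X' = 0 almost surely. -/
open MeasureTheory Filter

noncomputable def trunc01 (n : ℕ) (t : ℝ) : ℝ := max (min t n) (-(n : ℝ))

lemma trunc01_cont (n : ℕ) : Continuous (trunc01 n) :=
  (continuous_id.min continuous_const).max continuous_const

lemma trunc01_lip (n : ℕ) (a b : ℝ) : |trunc01 n a - trunc01 n b| ≤ |a - b| := by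
  have h : LipschitzWith 1 (trunc01 n) :=
    (LipschitzWith.id.min_const (n : ℝ)).max_const (-(n : ℝ))
  have := h.dist_le_mul a b
  simpa [Real.dist_eq] using this

lemma trunc01_mono (n : ℕ) {a b : ℝ} (h : a ≤ b) : trunc01 n a ≤ trunc01 n b :=
  max_le_max (min_le_min h le_rfl) le_rfl

lemma trunc01_sub_le (n : ℕ) (a b : ℝ) : trunc01 n a - trunc01 n b ≤ max (a - b) 0 := by
  rcases le_total a b with h | h
  · have := trunc01_mono n h
    have : trunc01 n a - trunc01 n b ≤ 0 := by linarith
    exact this.trans (le_max_right _ _)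
  · have h1 := trunc01_lip n a b
    have h2 : trunc01 n a - trunc01 n b ≤ |a - b| := (le_abs_self _).trans h1
    rwa [abs_of_nonneg (by linarith), ← max_eq_left (show (0:ℝ) ≤ a - b by linarith)] at h2
    
lemma trunc01_abs_le (n : ℕ) (t : ℝ) : |trunc01 n t| ≤ (n : ℝ) := by
  rw [abs_le]
  constructor
  · exact le_max_right _ _
  · exact max_le ((min_le_right _ _)) (by simp)

lemma trunc01_eq (n : ℕ) {t : ℝ} (h : |t| ≤ (n : ℝ)) : trunc01 n t = t := by
  rw [abs_le] at h
  rw [trunc01, min_eq_left h.2, max_eq_left h.1]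

/-- If `X` is integrable, `X' ≤ 0` a.s., `Y` and `Y'` have the same law, and
`X + X' ≥ Y - Y'` a.s., then `E[X] ≥ 0`; and if `E[X] = 0` then `X' = 0` a.s. -/
theorem stmt_1 {Ω : Type*} [MeasurableSpace Ω] (μ : Measure Ω) [IsProbabilityMeasure μ]
    (X X' Y Y' : Ω → ℝ)
    (hX : Integrable X μ)
    (hX' : ∀ᵐ ω ∂μ, X' ω ≤ 0)
    (hY : Measurable Y) (hY' : Measurable Y')
    (hlaw : μ.map Y = μ.map Y')
    (hineq : ∀ᵐ ω ∂μ, Y ω - Y' ω ≤ X ω + X' ω) :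
    0 ≤ ∫ ω, X ω ∂μ ∧ (∫ ω, X ω ∂μ = 0 → ∀ᵐ ω ∂μ, X' ω = 0) := by
  set Z : Ω → ℝ := fun ω => Y ω - Y' ω with hZdef
  have hZmeas : Measurable Z := hY.sub hY'
  have hZleX : ∀ᵐ ω ∂μ, Z ω ≤ X ω := by
    filter_upwards [hX', hineq] with ω h1 h2
    simp only [hZdef]; linarith
  set I : ℕ → Ω → ℝ := fun n ω => trunc01 n (Y ω) - trunc01 n (Y' ω) with hIdef
  have hImeas : ∀ n, Measurable (I n) := fun n =>
    ((trunc01_cont n).measurable.comp hY).sub ((trunc01_cont n).measurable.comp hY')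
  have hint1 : ∀ n, Integrable (fun ω => trunc01 n (Y ω)) μ := fun n =>
    Integrable.mono' (integrable_const (n : ℝ))
      ((trunc01_cont n).measurable.comp hY).aestronglyMeasurable
      (ae_of_all _ fun ω => by simpa using trunc01_abs_le n (Y ω))
  have hint2 : ∀ n, Integrable (fun ω => trunc01 n (Y' ω)) μ := fun n =>
    Integrable.mono' (integrable_const (n : ℝ))
      ((trunc01_cont n).measurable.comp hY').aestronglyMeasurable
      (ae_of_all _ fun ω => by simpa using trunc01_abs_le n (Y' ω))
  have hIint : ∀ n, Integrable (I n) μ := fun n => (hint1 n).sub (hint2 n)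
  have hIzero : ∀ n, ∫ ω, I n ω ∂μ = 0 := by
    intro n
    have e1 : ∫ ω, trunc01 n (Y ω) ∂μ = ∫ ω, trunc01 n (Y' ω) ∂μ := by
      rw [← integral_map hY.aemeasurable (trunc01_cont n).measurable.aestronglyMeasurable, hlaw,
        integral_map hY'.aemeasurable (trunc01_cont n).measurable.aestronglyMeasurable]
    simp only [hIdef]
    rw [integral_sub (hint1 n) (hint2 n), e1, sub_self]
  -- pointwise eventual equality
  have hItend : ∀ ω, ∀ᶠ n in atTop, I n ω = Z ω := by
    intro ω
    filter_upwards [eventually_ge_atTop ⌈|Y ω|⌉₊, eventually_ge_atTop ⌈|Y' ω|⌉₊] with n h1 h2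
    have e1 : |Y ω| ≤ (n : ℝ) := (Nat.le_ceil _).trans (by exact_mod_cast h1)
    have e2 : |Y' ω| ≤ (n : ℝ) := (Nat.le_ceil _).trans (by exact_mod_cast h2)
    simp only [hIdef, hZdef, trunc01_eq n e1, trunc01_eq n e2]
  set G : Ω → ℝ := fun ω => max (X ω) 0 with hGdef
  have hGint : Integrable G μ := hX.pos_part
  have hIposle : ∀ n, ∀ᵐ ω ∂μ, max (I n ω) 0 ≤ G ω := by
    intro n
    filter_upwards [hZleX] with ω hz
    have h1 : I n ω ≤ max (Z ω) 0 := trunc01_sub_le n (Y ω) (Y' ω)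
    exact max_le (h1.trans (max_le (hz.trans (le_max_left _ _)) (le_max_right _ _)))
      (le_max_right _ _)
  have hInorm : ∀ n, ∫ ω, ‖I n ω‖ ∂μ ≤ 2 * ∫ ω, G ω ∂μ := by
    intro n
    have habs : (fun ω => ‖I n ω‖) = fun ω => 2 * max (I n ω) 0 - I n ω := by
      funext ω
      rcases le_total (I n ω) 0 with h | h
      · rw [Real.norm_eq_abs, abs_of_nonpos h, max_eq_right h]; ring
      · rw [Real.norm_eq_abs, abs_of_nonneg h, max_eq_left h]; ring
    rw [habs, integral_sub ((hIint n).pos_part.const_mul 2) (hIint n), hIzero n, sub_zero,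
      integral_const_mul]
    have := integral_mono_ae (hIint n).pos_part hGint (hIposle n)
    linarith
  -- integrability of Z via Fatou
  have hZint : Integrable Z μ := by
    refine ⟨hZmeas.aestronglyMeasurable, ?_⟩
    show ∫⁻ ω, ‖Z ω‖₊ ∂μ < ⊤
    have key : ∫⁻ ω, ‖Z ω‖₊ ∂μ ≤ ENNReal.ofReal (2 * ∫ ω, G ω ∂μ) := by
      have step1 : ∫⁻ ω, ‖Z ω‖₊ ∂μ =
          ∫⁻ ω, liminf (fun n => (‖I n ω‖₊ : ENNReal)) atTop ∂μ := by
        refine lintegral_congr fun ω => ?_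
        have : Tendsto (fun n => (‖I n ω‖₊ : ENNReal)) atTop (nhds (‖Z ω‖₊ : ENNReal)) := by
          refine tendsto_const_nhds.congr' ?_
          filter_upwards [hItend ω] with n h
          rw [h]
        exact this.liminf_eq.symm
      rw [step1]
      refine (lintegral_liminf_le fun n => (hImeas n).nnnorm.coe_nnreal_ennreal).trans ?_
      refine liminf_le_of_frequently_le' (Frequently.of_forall fun n => ?_)
      rw [show (∫⁻ ω, (‖I n ω‖₊ : ENNReal) ∂μ) = ∫⁻ ω, ‖I n ω‖ₑ ∂μ from rfl,
        ← ofReal_integral_norm_eq_lintegral_enorm (hIint n)]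
      exact ENNReal.ofReal_le_ofReal (hInorm n)
    exact key.trans_lt ENNReal.ofReal_lt_top
  -- E[Z] = 0 by dominated convergence
  have hZzero : ∫ ω, Z ω ∂μ = 0 := by
    have hdom := tendsto_integral_of_dominated_convergence (fun ω => ‖Z ω‖)
      (fun n => (hImeas n).aestronglyMeasurable) hZint.norm
      (fun n => ae_of_all _ fun ω => by
        simp only [Real.norm_eq_abs]
        exact trunc01_lip n (Y ω) (Y' ω))
      (ae_of_all _ fun ω => tendsto_const_nhds.congr' (by
        filter_upwards [hItend ω] with n h; exact h.symm))
    have h2 : Tendsto (fun n => ∫ ω, I n ω ∂μ) atTop (nhds 0) := by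
      simp [hIzero]
    exact (tendsto_nhds_unique hdom h2)
  have part1 : 0 ≤ ∫ ω, X ω ∂μ := by
    calc (0:ℝ) = ∫ ω, Z ω ∂μ := hZzero.symm
    _ ≤ ∫ ω, X ω ∂μ := integral_mono_ae hZint hX hZleX
  refine ⟨part1, fun h0 => ?_⟩
  have hWint : Integrable (fun ω => X ω - Z ω) μ := hX.sub hZint
  have hWnn : 0 ≤ᵐ[μ] fun ω => X ω - Z ω := by
    filter_upwards [hineq, hX'] with ω h1 h2
    simp only [hZdef, Pi.zero_apply]; linarith
  have hWzero : ∫ ω, (X ω - Z ω) ∂μ = 0 := by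
    rw [integral_sub hX hZint, hZzero, h0, sub_zero]
  have hW0 : (fun ω => X ω - Z ω) =ᵐ[μ] 0 :=
    (integral_eq_zero_iff_of_nonneg_ae hWnn hWint).mp hWzero
  filter_upwards [hW0, hineq, hX'] with ω e h1 h2
  simp only [hZdef, Pi.zero_apply] at e
  linarith
end

section
/- Let X = (X₁,X₂), X' = (X₁',X₂'), Y = (Y₁,Y₂), Y' = (Y₁',Y₂') be random variables with values in ℝ², such that both coordinates of X are integrable, X + X' ≥_lex Y - Y' almost surely, X' ≤_lex (0,0) almost surely, and Y has the same law as Y'. Then E[X] ≥_lex (0,0) in lexicographic order, and equality E[X] = (0,0) implies X' = (0,0) almost surely. -/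
open MeasureTheory
open Filter


noncomputable def trnc (M : ℕ) (t : ℝ) : ℝ := max (-(M:ℝ)) (min t M)

lemma trnc_mono (M : ℕ) : Monotone (trnc M) :=
  monotone_const.max ((monotone_id.min monotone_const))

lemma trnc_meas (M : ℕ) : Measurable (trnc M) :=
  measurable_const.max (measurable_id.min measurable_const)

lemma min_lip (a b c : ℝ) : |min a c - min b c| ≤ |a - b| := by
  have h := abs_max_sub_max_le_abs (-a) (-b) (-c)
  rw [max_neg_neg, max_neg_neg, neg_sub_neg, neg_sub_neg] at h
  rw [abs_sub_comm, abs_sub_comm a b]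
  exact h

lemma trnc_lip (M : ℕ) (a b : ℝ) : |trnc M a - trnc M b| ≤ |a - b| := by
  have h1 : |min a (M:ℝ) - min b (M:ℝ)| ≤ |a - b| := min_lip a b M
  calc |trnc M a - trnc M b| ≤ |min a (M:ℝ) - min b (M:ℝ)| := by
        simpa [trnc, max_comm] using abs_max_sub_max_le_abs (min a (M:ℝ)) (min b (M:ℝ)) (-(M:ℝ))
    _ ≤ |a - b| := h1

lemma trnc_eq (M : ℕ) (t : ℝ) (h : |t| ≤ M) : trnc M t = t := by
  rw [abs_le] at h
  simp [trnc, min_eq_left h.2, max_eq_right h.1]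

lemma trnc_abs_le (M : ℕ) (t : ℝ) : |trnc M t| ≤ M := by
  rw [abs_le]
  exact ⟨le_max_left _ _, max_le (neg_le_self (Nat.cast_nonneg M)) (min_le_right _ _)⟩

lemma core {Ω : Type*} [MeasurableSpace Ω] (μ : Measure Ω) [IsProbabilityMeasure μ]
    {Z Z' V : Ω → ℝ} (hZ : Measurable Z) (hZ' : Measurable Z')
    (hmap : μ.map Z = μ.map Z') (hV : Integrable V μ)
    (hle : ∀ᵐ ω ∂μ, Z ω - Z' ω ≤ V ω) : 0 ≤ ∫ ω, V ω ∂μ := by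
  set h : ℕ → Ω → ℝ := fun M ω => trnc M (Z' ω + V ω) - trnc M (Z' ω) with hh
  have hZint : ∀ M : ℕ, Integrable (fun ω => trnc M (Z ω)) μ := fun M =>
    (integrable_const (M:ℝ)).mono' ((trnc_meas M).comp hZ).aestronglyMeasurable
      (ae_of_all _ fun ω => by simpa using trnc_abs_le M (Z ω))
  have hZ'int : ∀ M : ℕ, Integrable (fun ω => trnc M (Z' ω)) μ := fun M =>
    (integrable_const (M:ℝ)).mono' ((trnc_meas M).comp hZ').aestronglyMeasurable
      (ae_of_all _ fun ω => by simpa using trnc_abs_le M (Z' ω))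
  have hZVint : ∀ M : ℕ, Integrable (fun ω => trnc M (Z' ω + V ω)) μ := fun M =>
    (integrable_const (M:ℝ)).mono'
      ((trnc_meas M).comp_aemeasurable (hZ'.aemeasurable.add hV.aemeasurable)).aestronglyMeasurable
      (ae_of_all _ fun ω => by simpa using trnc_abs_le M (Z' ω + V ω))
  have hmeas : ∀ M : ℕ, AEStronglyMeasurable (h M) μ := fun M =>
    ((hZVint M).aestronglyMeasurable.sub (hZ'int M).aestronglyMeasurable)
  have hbound : ∀ M : ℕ, ∀ᵐ ω ∂μ, ‖h M ω‖ ≤ |V ω| := fun M =>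
    ae_of_all _ fun ω => by
      simpa [hh] using trnc_lip M (Z' ω + V ω) (Z' ω)
  have hlim : ∀ᵐ ω ∂μ, Tendsto (fun M => h M ω) atTop (nhds (V ω)) := by
    refine ae_of_all _ fun ω => ?_
    refine tendsto_atTop_of_eventually_const (i₀ := ⌈max |Z' ω + V ω| |Z' ω|⌉₊) fun M hM => ?_
    have h1 : |Z' ω + V ω| ≤ M := le_trans (le_trans (le_max_left _ _) (Nat.le_ceil _))
      (Nat.cast_le.2 hM)
    have h2 : |Z' ω| ≤ M := le_trans (le_trans (le_max_right _ _) (Nat.le_ceil _))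
      (Nat.cast_le.2 hM)
    simp [hh, trnc_eq M _ h1, trnc_eq M _ h2]
  have htend := tendsto_integral_of_dominated_convergence (fun ω => |V ω|) hmeas
    hV.abs hbound hlim
  refine ge_of_tendsto' htend fun M => ?_
  have key : ∫ ω, trnc M (Z' ω) ∂μ ≤ ∫ ω, trnc M (Z' ω + V ω) ∂μ := by
    have e1 : ∫ ω, trnc M (Z ω) ∂μ = ∫ ω, trnc M (Z' ω) ∂μ := by
      rw [← integral_map hZ.aemeasurable (trnc_meas M).aestronglyMeasurable, hmap,
        integral_map hZ'.aemeasurable (trnc_meas M).aestronglyMeasurable]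
    rw [← e1]
    refine integral_mono_ae (hZint M) (hZVint M) ?_
    filter_upwards [hle] with ω hω
    exact trnc_mono M (by linarith)
  rw [integral_sub (hZVint M) (hZ'int M)]
  linarith

lemma core_eq {Ω : Type*} [MeasurableSpace Ω] (μ : Measure Ω) [IsProbabilityMeasure μ]
    {Z Z' V : Ω → ℝ} (hZ : Measurable Z) (hZ' : Measurable Z')
    (hmap : μ.map Z = μ.map Z') (hV : Integrable V μ)
    (hle : ∀ᵐ ω ∂μ, Z ω - Z' ω ≤ V ω) (hzero : ∫ ω, V ω ∂μ = 0) :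
    ∀ᵐ ω ∂μ, V ω = Z ω - Z' ω := by
  set V₀ : Ω → ℝ := hV.1.mk V with hV₀
  have hV₀meas : Measurable V₀ := hV.1.stronglyMeasurable_mk.measurable
  have hVV₀ : V =ᵐ[μ] V₀ := hV.1.ae_eq_mk
  have hV₀int : Integrable V₀ μ := hV.congr hVV₀
  have hle₀ : ∀ᵐ ω ∂μ, Z ω - Z' ω ≤ V₀ ω := by
    filter_upwards [hle, hVV₀] with ω h1 h2; linarith [h2 ▸ h1]
  have hzero₀ : ∫ ω, V₀ ω ∂μ = 0 := by rw [← integral_congr_ae hVV₀]; exact hzero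
  have key : ∀ n : ℕ, ∀ᵐ ω ∂μ, ¬ (Z ω - Z' ω + 1/(n+1) ≤ V₀ ω) := by
    intro n
    set ε : ℝ := 1/(n+1) with hε
    have hεpos : 0 < ε := by positivity
    set A : Set Ω := {ω | Z ω - Z' ω + ε ≤ V₀ ω} with hA
    have hAmeas : MeasurableSet A :=
      measurableSet_le (((hZ.sub hZ').add measurable_const)) hV₀meas
    have hV'int : Integrable (fun ω => V₀ ω - A.indicator (fun _ => ε) ω) μ :=
      hV₀int.sub ((integrable_const ε).indicator hAmeas)
    have hle' : ∀ᵐ ω ∂μ, Z ω - Z' ω ≤ V₀ ω - A.indicator (fun _ => ε) ω := by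
      filter_upwards [hle₀] with ω h1
      by_cases hω : ω ∈ A
      · have h2 := hω
        simp only [hA, Set.mem_setOf_eq] at h2
        simp only [Set.indicator_of_mem hω]
        linarith
      · simp only [Set.indicator_of_notMem hω]
        linarith
    have h0 := core μ hZ hZ' hmap hV'int hle'
    rw [integral_sub hV₀int ((integrable_const ε).indicator hAmeas), hzero₀,
      integral_indicator_const ε hAmeas] at h0
    have hμA : μ A = 0 := by
      by_contra hne
      have hpos : 0 < (μ A).toReal := ENNReal.toReal_pos hne (measure_ne_top μ A)
      have : (0:ℝ) < (μ A).toReal • ε := smul_pos hpos hεpos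
      change 0 ≤ 0 - (μ A).toReal • ε at h0
      linarith
    have : ∀ᵐ ω ∂μ, ω ∉ A := by
      rw [ae_iff]; simpa using hμA
    filter_upwards [this] with ω hω
    simpa [hA, Set.mem_setOf_eq] using hω
  have hall : ∀ᵐ ω ∂μ, ∀ n : ℕ, ¬ (Z ω - Z' ω + 1/(n+1) ≤ V₀ ω) := ae_all_iff.2 key
  filter_upwards [hall, hle₀, hVV₀] with ω h1 h2 h3
  have hle'' : V₀ ω ≤ Z ω - Z' ω := by
    by_contra hc
    push_neg at hc
    obtain ⟨n, hn⟩ := exists_nat_one_div_lt (show (0:ℝ) < V₀ ω - (Z ω - Z' ω) by linarith)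
    exact h1 n (by linarith)
  rw [h3]; linarith

/-- The lexicographic order on `ℝ × ℝ`. -/
def lexLe (x y : ℝ × ℝ) : Prop := x.1 < y.1 ∨ (x.1 = y.1 ∧ x.2 ≤ y.2)

/-- Two-dimensional version: if both coordinates of `X` are integrable,
`X + X' ≥_lex Y - Y'` a.s., `X' ≤_lex (0,0)` a.s., and `Y` has the same law as `Y'`,
then `E[X] ≥_lex (0,0)`, and `E[X] = (0,0)` implies `X' = (0,0)` a.s. -/
theorem stmt_2 {Ω : Type*} [MeasurableSpace Ω] (μ : Measure Ω) [IsProbabilityMeasure μ]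
    (X₁ X₂ X₁' X₂' Y₁ Y₂ Y₁' Y₂' : Ω → ℝ)
    (hX₁ : Integrable X₁ μ) (hX₂ : Integrable X₂ μ)
    (hY₁ : Measurable Y₁) (hY₂ : Measurable Y₂)
    (hY₁' : Measurable Y₁') (hY₂' : Measurable Y₂')
    (hlaw : μ.map (fun ω => (Y₁ ω, Y₂ ω)) = μ.map (fun ω => (Y₁' ω, Y₂' ω)))
    (hineq : ∀ᵐ ω ∂μ,
      lexLe (Y₁ ω - Y₁' ω, Y₂ ω - Y₂' ω) (X₁ ω + X₁' ω, X₂ ω + X₂' ω))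
    (hX'le : ∀ᵐ ω ∂μ, lexLe (X₁' ω, X₂' ω) (0, 0)) :
    lexLe (0, 0) (∫ ω, X₁ ω ∂μ, ∫ ω, X₂ ω ∂μ) ∧
      ((∫ ω, X₁ ω ∂μ = 0 ∧ ∫ ω, X₂ ω ∂μ = 0) →
        ∀ᵐ ω ∂μ, X₁' ω = 0 ∧ X₂' ω = 0) := by
  -- marginal laws
  have hpair : Measurable (fun ω => (Y₁ ω, Y₂ ω)) := hY₁.prodMk hY₂
  have hpair' : Measurable (fun ω => (Y₁' ω, Y₂' ω)) := hY₁'.prodMk hY₂'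
  have hmap₁ : μ.map Y₁ = μ.map Y₁' := by
    have h := congrArg (Measure.map Prod.fst) hlaw
    rwa [Measure.map_map measurable_fst hpair, Measure.map_map measurable_fst hpair'] at h
  have hmap₂ : μ.map Y₂ = μ.map Y₂' := by
    have h := congrArg (Measure.map Prod.snd) hlaw
    rwa [Measure.map_map measurable_snd hpair, Measure.map_map measurable_snd hpair'] at h
  have hX₁'le : ∀ᵐ ω ∂μ, X₁' ω ≤ 0 := by
    filter_upwards [hX'le] with ω hω
    rcases hω with h | ⟨h, -⟩
    · exact le_of_lt h
    · exact le_of_eq h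
  have hle₁ : ∀ᵐ ω ∂μ, Y₁ ω - Y₁' ω ≤ X₁ ω := by
    filter_upwards [hineq, hX₁'le] with ω h1 h2
    rcases h1 with h | ⟨h, -⟩ <;> simp only at h <;> linarith
  have h0₁ : 0 ≤ ∫ ω, X₁ ω ∂μ := core μ hY₁ hY₁' hmap₁ hX₁ hle₁
  rcases h0₁.lt_or_eq with hlt | heq0
  · exact ⟨Or.inl hlt, fun h => absurd h.1 (by linarith)⟩
  · -- ∫ X₁ = 0
    have heq := core_eq μ hY₁ hY₁' hmap₁ hX₁ hle₁ heq0.symm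
    have hsq : ∀ᵐ ω ∂μ, X₁' ω = 0 ∧ Y₁ ω - Y₁' ω = X₁ ω + X₁' ω := by
      filter_upwards [hineq, hX₁'le, heq] with ω h1 h2 h3
      rcases h1 with h | ⟨h, -⟩ <;> simp only at h <;> constructor <;> linarith
    have hX₂'le : ∀ᵐ ω ∂μ, X₂' ω ≤ 0 := by
      filter_upwards [hX'le, hsq] with ω h1 h2
      rcases h1 with h | ⟨-, h⟩
      · simp only at h; linarith [h2.1]
      · exact h
    have hle₂ : ∀ᵐ ω ∂μ, Y₂ ω - Y₂' ω ≤ X₂ ω := by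
      filter_upwards [hineq, hsq, hX₂'le] with ω h1 h2 h3
      rcases h1 with h | ⟨-, h⟩
      · simp only at h; linarith [h2.2]
      · simp only at h; linarith
    have h0₂ : 0 ≤ ∫ ω, X₂ ω ∂μ := core μ hY₂ hY₂' hmap₂ hX₂ hle₂
    refine ⟨Or.inr ⟨heq0, h0₂⟩, ?_⟩
    rintro ⟨-, h₂0⟩
    have heq₂ := core_eq μ hY₂ hY₂' hmap₂ hX₂ hle₂ h₂0
    filter_upwards [hineq, hsq, hX₂'le, heq₂] with ω h1 h2 h3 h4
    refine ⟨h2.1, ?_⟩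
    rcases h1 with h | ⟨-, h⟩
    · simp only at h; linarith [h2.2]
    · simp only at h; linarith
end

section
/- For every c with 0 < c < e, and for every random variable X taking values in [0,1], one has c² · E[e^{-cX}] · e^{-c·E[e^{-cX}]} < 1. -/
open MeasureTheory

/-- Subcriticality for Poisson(c) with `c < e`: for every random variable `X` with values
in `[0,1]`, one has `c² · E[e^{-cX}] · e^{-c E[e^{-cX}]} < 1`. -/
theorem stmt_3 {Ω : Type*} [MeasurableSpace Ω] (μ : Measure Ω) [IsProbabilityMeasure μ]
    (c : ℝ) (hc0 : 0 < c) (hce : c < Real.exp 1)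
    (X : Ω → ℝ) (hXm : Measurable X) (hX : ∀ ω, X ω ∈ Set.Icc (0 : ℝ) 1) :
    c ^ 2 * (∫ ω, Real.exp (-(c * X ω)) ∂μ) *
      Real.exp (-(c * ∫ ω, Real.exp (-(c * X ω)) ∂μ)) < 1 := by
  set t : ℝ := ∫ ω, Real.exp (-(c * X ω)) ∂μ with ht
  have key : ∀ x : ℝ, x * Real.exp (-x) ≤ Real.exp (-1) := by
    intro x
    have h1 : x ≤ Real.exp (x - 1) := by
      have := Real.add_one_le_exp (x - 1)
      linarith
    calc x * Real.exp (-x) ≤ Real.exp (x - 1) * Real.exp (-x) := by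
          apply mul_le_mul_of_nonneg_right h1 (Real.exp_pos _).le
      _ = Real.exp (-1) := by rw [← Real.exp_add]; ring_nf
  have h2 : c * t * Real.exp (-(c * t)) ≤ Real.exp (-1) := key (c * t)
  have h3 : c ^ 2 * t * Real.exp (-(c * t)) = c * (c * t * Real.exp (-(c * t))) := by ring
  rw [h3]
  calc c * (c * t * Real.exp (-(c * t))) ≤ c * Real.exp (-1) :=
        mul_le_mul_of_nonneg_left h2 hc0.le
    _ < Real.exp 1 * Real.exp (-1) :=
        mul_lt_mul_of_pos_right hce (Real.exp_pos _)
    _ = 1 := by rw [← Real.exp_add]; simp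
end

section
/- Let c > e. Then the equation x = e^{-c·e^{-cx}} has at least three solutions in (0,1); in particular the smallest solution γ̲ and the largest solution γ̄ satisfy γ̲ < γ̄, γ̄ = e^{-cγ̲} and γ̲ = e^{-cγ̄}. -/
/-- For `c > e`, the equation `x = e^{-c e^{-cx}}` has at least three solutions in `(0,1)`;
the smallest solution `x` and the largest solution `z` satisfy `x < z`, `z = e^{-cx}` and
`x = e^{-cz}`. -/
theorem stmt_17 (c : ℝ) (hc : Real.exp 1 < c) :
    ∃ x y z : ℝ,
      x ∈ Set.Ioo (0 : ℝ) 1 ∧ y ∈ Set.Ioo (0 : ℝ) 1 ∧ z ∈ Set.Ioo (0 : ℝ) 1 ∧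
      x = Real.exp (-(c * Real.exp (-(c * x)))) ∧
      y = Real.exp (-(c * Real.exp (-(c * y)))) ∧
      z = Real.exp (-(c * Real.exp (-(c * z)))) ∧
      x < y ∧ y < z ∧
      (∀ w ∈ Set.Ioo (0 : ℝ) 1,
        w = Real.exp (-(c * Real.exp (-(c * w)))) → x ≤ w ∧ w ≤ z) ∧
      z = Real.exp (-(c * x)) ∧ x = Real.exp (-(c * z)) := by
  have he : (0:ℝ) < Real.exp 1 := Real.exp_pos 1
  have hc0 : 0 < c := he.trans hc
  have hc1 : 1 < c := by nlinarith [Real.add_one_le_exp 1]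
  set g : ℝ → ℝ := fun t => Real.exp (-(c * t)) with hgdef
  have hganti : StrictAnti g := by
    intro a b h
    show Real.exp (-(c * b)) < Real.exp (-(c * a))
    exact Real.exp_lt_exp.mpr (by nlinarith)
  have hgcont : Continuous g := by fun_prop
  have hfcont : Continuous (fun t => g (g t)) := hgcont.comp hgcont
  set S : Set ℝ := {w | w ∈ Set.Icc (0:ℝ) 1 ∧ g (g w) = w} with hSdef
  have hScpt : IsCompact S := by
    have hSeq : S = Set.Icc (0:ℝ) 1 ∩ {w | g (g w) = w} := rfl
    rw [hSeq]
    exact isCompact_Icc.inter_right (isClosed_eq hfcont continuous_id)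
  -- basic facts
  have hIoo : ∀ t, g (g t) ∈ Set.Ioo (0:ℝ) 1 := by
    intro t
    refine ⟨Real.exp_pos _, ?_⟩
    have h := Real.exp_pos (-(c*t))
    have : -(c * Real.exp (-(c*t))) < 0 := by nlinarith
    calc g (g t) = Real.exp (-(c * Real.exp (-(c*t)))) := rfl
      _ < 1 := Real.exp_lt_one_iff.mpr this
  have hinv : (0:ℝ) < 1/c := by positivity
  have hinv1 : 1/c ≤ 1 := by rw [div_le_one hc0]; linarith
  have hg1c : g (1/c) = Real.exp (-1) := by
    show Real.exp (-(c * (1/c))) = Real.exp (-1)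
    rw [mul_one_div, div_self (ne_of_gt hc0)]
  -- log c ≤ c * exp(-1)
  have hlog : Real.log c ≤ c * Real.exp (-1) := by
    have h1 : Real.log (c / Real.exp 1) ≤ c / Real.exp 1 - 1 :=
      Real.log_le_sub_one_of_pos (by positivity)
    rw [Real.log_div (ne_of_gt hc0) (ne_of_gt he), Real.log_exp] at h1
    rw [Real.exp_neg]
    rw [div_eq_mul_inv] at h1
    linarith
  have hstep : g (g (1/c)) ≤ 1/c := by
    rw [hg1c]
    calc g (Real.exp (-1)) = Real.exp (-(c * Real.exp (-1))) := rfl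
      _ ≤ Real.exp (-(Real.log c)) := Real.exp_le_exp.mpr (by linarith)
      _ = 1/c := by rw [Real.exp_neg, Real.exp_log hc0, one_div]
  -- fixed point w₀ of f in [0, 1/c]
  obtain ⟨w₀, hw₀mem, hw₀eq⟩ :=
    intermediate_value_Icc' (le_of_lt hinv)
      ((hfcont.sub continuous_id).continuousOn)
      (show (0:ℝ) ∈ Set.Icc (g (g (1/c)) - 1/c) (g (g 0) - 0) from
        ⟨by linarith, by have := (hIoo 0).1; linarith⟩)
  have hw₀fix : g (g w₀) = w₀ := by have := hw₀eq; dsimp at this; linarith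
  have hw₀S : w₀ ∈ S := ⟨⟨hw₀mem.1, hw₀mem.2.trans hinv1⟩, hw₀fix⟩
  -- fixed point y of g in (1/c, 1)
  have hG1c : 1/c < g (1/c) := by
    rw [hg1c, Real.exp_neg]
    rw [one_div]
    exact inv_strictAnti₀ he hc
  have hG1 : g 1 < 1 := by
    calc g 1 = Real.exp (-(c*1)) := rfl
      _ < 1 := Real.exp_lt_one_iff.mpr (by linarith)
  obtain ⟨y, hymem, hyeq⟩ :=
    intermediate_value_Icc' hinv1
      ((hgcont.sub continuous_id).continuousOn)
      (show (0:ℝ) ∈ Set.Icc (g 1 - 1) (g (1/c) - 1/c) from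
        ⟨by linarith, by linarith⟩)
  have hyfix : g y = y := by dsimp at hyeq; linarith
  have hylt1 : y < 1 := lt_of_le_of_ne hymem.2 (by rintro rfl; exact absurd hyfix (ne_of_lt hG1))
  have hygt : 1/c < y :=
    lt_of_le_of_ne hymem.1 (by rintro rfl; exact absurd hyfix.symm (ne_of_lt hG1c))
  have hyS : y ∈ S := ⟨⟨le_trans hinv.le hygt.le, hymem.2⟩, by rw [hyfix, hyfix]⟩
  have hSne : S.Nonempty := ⟨w₀, hw₀S⟩
  -- g maps S to S
  have hgS : ∀ w ∈ S, g w ∈ S := by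
    intro w hw
    refine ⟨⟨(Real.exp_pos _).le, ?_⟩, congrArg g hw.2⟩
    calc g w = Real.exp (-(c*w)) := rfl
      _ ≤ 1 := Real.exp_le_one_iff.mpr (by nlinarith [hw.1.1])
  set x := sInf S with hxdef
  set z := sSup S with hzdef
  have hxS : x ∈ S := hScpt.sInf_mem hSne
  have hzS : z ∈ S := hScpt.sSup_mem hSne
  have hle : ∀ w ∈ S, x ≤ w := fun w hw => csInf_le hScpt.bddBelow hw
  have hge : ∀ w ∈ S, w ≤ z := fun w hw => le_csSup hScpt.bddAbove hw
  have hzgx : z = g x := by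
    refine le_antisymm ?_ (hge _ (hgS x hxS))
    have h1 : x ≤ g z := hle _ (hgS z hzS)
    calc z = g (g z) := hzS.2.symm
      _ ≤ g x := hganti.antitone h1
  have hxgz : x = g z := by rw [hzgx]; exact hxS.2.symm
  have hxley : x ≤ 1/c := le_trans (hle w₀ hw₀S) hw₀mem.2
  have hxy : x < y := lt_of_le_of_lt hxley hygt
  have hyz : y < z := by
    calc y = g y := hyfix.symm
      _ < g x := hganti hxy
      _ = z := hzgx.symm
  refine ⟨x, y, z, hxS.2 ▸ hIoo x, ⟨lt_trans hinv hygt, hylt1⟩, hzS.2 ▸ hIoo z,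
    hxS.2.symm, hyS.2.symm, hzS.2.symm, hxy, hyz, ?_, hzgx, hxgz⟩
  intro w hw hwfix
  have hwS : w ∈ S := ⟨⟨hw.1.le, hw.2.le⟩, hwfix.symm⟩
  exact ⟨hle w hwS, hge w hwS⟩
end

section
/- Let φ̂ : [0,1] → [0,1] be twice continuously differentiable, increasing, with φ̂(1) = 1, and suppose that for every random variable X with values in [0,1], E[φ̂'(1-X)]·φ̂'(1 - E[φ̂(1-X)]) ≤ ρ for some ρ < 1. Let 𝒳 be the set of increasing càdlàg functions f : ℝ → [0,1], with metric d(f,g) = sup_ℝ |f - g|. Fix a probability measure ω on ℝ and define T : 𝒳 → 𝒳 by (Tf)(t) = φ̂(1 - E_{W∼ω}[ φ̂(1 - E_{W'∼ω}[ f(W' - W + t) ]) ]). Then T is a contraction: for all f, f' ∈ 𝒳, sup_ℝ |Tf - Tf'| ≤ ρ · sup_ℝ |f - f'|. -/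
open MeasureTheory Set Filter

noncomputable def dW (φ : ℝ → ℝ) : ℝ → ℝ := derivWithin φ (Set.Icc 0 1)

noncomputable def dExt (φ : ℝ → ℝ) : ℝ → ℝ := fun x => dW φ (max 0 (min 1 x))

noncomputable def psiExt (φ : ℝ → ℝ) : ℝ → ℝ := fun x =>
  if x < 0 then φ 0 + dW φ 0 * x else if 1 < x then φ 1 + dW φ 1 * (x - 1) else φ x

lemma psiExt_eq (φ : ℝ → ℝ) {x : ℝ} (hx : x ∈ Set.Icc (0:ℝ) 1) : psiExt φ x = φ x := by
  simp only [psiExt, if_neg (not_lt.2 hx.1), if_neg (not_lt.2 hx.2)]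

lemma dExt_eq (φ : ℝ → ℝ) {x : ℝ} (hx : x ∈ Set.Icc (0:ℝ) 1) : dExt φ x = dW φ x := by
  simp only [dExt, max_eq_right_iff.2 (le_min (le_refl _) hx.1) ]
  rw [min_eq_right hx.2, max_eq_right hx.1]

section aux
variable {φ : ℝ → ℝ} (hsmooth : ContDiffOn ℝ 2 φ (Set.Icc 0 1))

lemma aux_hdw (hsmooth : ContDiffOn ℝ 2 φ (Set.Icc 0 1)) {x : ℝ} (hx : x ∈ Set.Icc (0:ℝ) 1) :
    HasDerivWithinAt φ (dW φ x) (Set.Icc 0 1) x :=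
  ((hsmooth.differentiableOn two_ne_zero) x hx).hasDerivWithinAt

lemma aux_dW_cont (hsmooth : ContDiffOn ℝ 2 φ (Set.Icc 0 1)) :
    ContinuousOn (dW φ) (Set.Icc 0 1) :=
  hsmooth.continuousOn_derivWithin (uniqueDiffOn_Icc one_pos) one_le_two

lemma aux_dExt_cont (hsmooth : ContDiffOn ℝ 2 φ (Set.Icc 0 1)) : Continuous (dExt φ) := by
  have hc : Continuous fun x : ℝ => max 0 (min 1 x) :=
    continuous_const.max (continuous_const.min continuous_id)
  have hmem : ∀ x : ℝ, max 0 (min 1 x) ∈ Set.Icc (0:ℝ) 1 :=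
    fun x => ⟨le_max_left _ _, max_le zero_le_one (min_le_left _ _)⟩
  exact (aux_dW_cont hsmooth).comp_continuous hc hmem

lemma clamp_lt (x : ℝ) (h : x < 0) : max 0 (min 1 x) = 0 := by
  rw [min_eq_right (by linarith), max_eq_left (by linarith)]

lemma clamp_gt (x : ℝ) (h : 1 < x) : max 0 (min 1 x) = 1 := by
  rw [min_eq_left (by linarith), max_eq_right zero_le_one]

lemma aux_l0 (φ : ℝ → ℝ) (x : ℝ) : HasDerivAt (fun y => φ 0 + dW φ 0 * y) (dW φ 0) x := by
  simpa using ((hasDerivAt_id x).const_mul (dW φ 0)).const_add (φ 0)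

lemma aux_l1 (φ : ℝ → ℝ) (x : ℝ) : HasDerivAt (fun y => φ 1 + dW φ 1 * (y - 1)) (dW φ 1) x := by
  simpa using (((hasDerivAt_id x).sub_const 1).const_mul (dW φ 1)).const_add (φ 1)

lemma aux_psi_hasDerivAt (hsmooth : ContDiffOn ℝ 2 φ (Set.Icc 0 1)) (x : ℝ) :
    HasDerivAt (psiExt φ) (dExt φ x) x := by
  rcases lt_or_ge x 0 with hx0 | hx0
  · have h1 : dExt φ x = dW φ 0 := by rw [dExt, clamp_lt x hx0]
    rw [h1]
    refine (aux_l0 φ x).congr_of_eventuallyEq ?_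
    filter_upwards [Iio_mem_nhds hx0] with y hy
    have hy' : y < 0 := hy
    simp [psiExt, hy']
  rcases lt_or_ge 1 x with hx1 | hx1
  · have h1 : dExt φ x = dW φ 1 := by rw [dExt, clamp_gt x hx1]
    rw [h1]
    refine (aux_l1 φ x).congr_of_eventuallyEq ?_
    filter_upwards [Ioi_mem_nhds hx1] with y hy
    have hy' : (1:ℝ) < y := hy
    simp [psiExt, hy', not_lt.2 (by linarith : (0:ℝ) ≤ y)]
  have hxI : x ∈ Set.Icc (0:ℝ) 1 := ⟨hx0, hx1⟩
  have h1 : dExt φ x = dW φ x := dExt_eq φ hxI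
  rw [h1]
  rcases eq_or_lt_of_le hx0 with h0 | h0
  · -- x = 0
    subst h0
    rw [← hasDerivWithinAt_univ, ← Set.Iic_union_Ici (a := (0:ℝ))]
    refine HasDerivWithinAt.union ?_ ?_
    · refine ((aux_l0 φ 0).hasDerivWithinAt).congr ?_ ?_
      · intro y hy
        rcases lt_or_eq_of_le (Set.mem_Iic.1 hy) with h | h
        · simp [psiExt, if_pos h]
        · subst h; simp [psiExt]
      · simp [psiExt]
    · have hIcc : Set.Icc (0:ℝ) 1 ∈ nhdsWithin 0 (Set.Ici (0:ℝ)) := by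
        rw [← Set.Ici_inter_Iic]
        exact Filter.inter_mem self_mem_nhdsWithin
          (mem_nhdsWithin_of_mem_nhds (Iic_mem_nhds one_pos))
      refine ((aux_hdw hsmooth hxI).mono_of_mem_nhdsWithin hIcc).congr_of_eventuallyEq ?_ ?_
      · filter_upwards [hIcc] with y hy using psiExt_eq φ hy
      · exact psiExt_eq φ hxI
  rcases eq_or_lt_of_le hx1 with h1' | h1'
  · -- x = 1
    rw [h1'] at hxI h0 ⊢
    rw [← hasDerivWithinAt_univ, ← Set.Iic_union_Ici (a := (1:ℝ))]
    refine HasDerivWithinAt.union ?_ ?_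
    · have hIcc : Set.Icc (0:ℝ) 1 ∈ nhdsWithin 1 (Set.Iic (1:ℝ)) := by
        rw [← Set.Ici_inter_Iic]
        exact Filter.inter_mem
          (mem_nhdsWithin_of_mem_nhds (Ici_mem_nhds h0)) self_mem_nhdsWithin
      refine ((aux_hdw hsmooth hxI).mono_of_mem_nhdsWithin hIcc).congr_of_eventuallyEq ?_ ?_
      · filter_upwards [hIcc] with y hy using psiExt_eq φ hy
      · exact psiExt_eq φ hxI
    · refine ((aux_l1 φ 1).hasDerivWithinAt).congr ?_ ?_
      · intro y hy
        rcases lt_or_eq_of_le (Set.mem_Ici.1 hy) with h | h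
        · simp [psiExt, if_neg (by linarith : ¬ y < 0), if_pos h]
        · rw [← h]; simp [psiExt]
      · simp [psiExt]
  · -- interior
    refine ((aux_hdw hsmooth hxI).hasDerivAt (Icc_mem_nhds h0 h1')).congr_of_eventuallyEq ?_
    filter_upwards [Ioo_mem_nhds h0 h1'] with y hy
    exact psiExt_eq φ ⟨hy.1.le, hy.2.le⟩
lemma aux_dW_nonneg (hsmooth : ContDiffOn ℝ 2 φ (Set.Icc 0 1))
    (hmono : MonotoneOn φ (Set.Icc 0 1)) {x : ℝ} (hx : x ∈ Set.Icc (0:ℝ) 1) :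
    0 ≤ dW φ x := by
  have hd := (aux_hdw hsmooth hx)
  rw [hasDerivWithinAt_iff_tendsto_slope] at hd
  have hne : (nhdsWithin x (Set.Icc (0:ℝ) 1 \ {x})).NeBot := by
    rcases lt_or_eq_of_le hx.2 with h1 | h1
    · have hsub : Set.Ioc x 1 ⊆ Set.Icc (0:ℝ) 1 \ {x} :=
        fun y hy => ⟨⟨le_trans hx.1 hy.1.le, hy.2⟩, ne_of_gt hy.1⟩
      have : (nhdsWithin x (Set.Ioc x 1)).NeBot := by
        rw [nhdsWithin_Ioc_eq_nhdsGT h1]; exact nhdsGT_neBot x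
      exact this.mono (nhdsWithin_mono x hsub)
    · have hsub : Set.Ico 0 x ⊆ Set.Icc (0:ℝ) 1 \ {x} :=
        fun y hy => ⟨⟨hy.1, h1 ▸ hy.2.le⟩, ne_of_lt hy.2⟩
      have h0 : (0:ℝ) < x := h1 ▸ one_pos
      have : (nhdsWithin x (Set.Ico 0 x)).NeBot := by
        rw [nhdsWithin_Ico_eq_nhdsLT h0]; exact nhdsLT_neBot x
      exact this.mono (nhdsWithin_mono x hsub)
  refine ge_of_tendsto hd ?_
  filter_upwards [self_mem_nhdsWithin] with y hy
  rcases hy with ⟨hyI, hyx⟩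
  have hyx' : y ≠ x := hyx
  rw [slope_def_field]
  rcases lt_or_gt_of_ne hyx' with h | h
  · have h1 : φ y - φ x ≤ 0 := by linarith [hmono hyI hx h.le]
    have h2 : y - x ≤ 0 := by linarith
    rw [div_nonneg_iff]; exact Or.inr ⟨h1, h2⟩
  · exact div_nonneg (by linarith [hmono hx hyI h.le]) (by linarith)

lemma aux_dExt_nonneg (hsmooth : ContDiffOn ℝ 2 φ (Set.Icc 0 1))
    (hmono : MonotoneOn φ (Set.Icc 0 1)) {x : ℝ} (hx : x ∈ Set.Icc (0:ℝ) 1) :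
    0 ≤ dExt φ x := by
  rw [dExt_eq φ hx]; exact aux_dW_nonneg hsmooth hmono hx

lemma aux_bound (hsmooth : ContDiffOn ℝ 2 φ (Set.Icc 0 1)) :
    ∃ M : ℝ, 0 ≤ M ∧ ∀ x : ℝ, |dExt φ x| ≤ M := by
  obtain ⟨M, hM⟩ := isCompact_Icc.exists_bound_of_continuousOn (aux_dW_cont hsmooth)
  have hmem : ∀ x : ℝ, max 0 (min 1 x) ∈ Set.Icc (0:ℝ) 1 :=
    fun x => ⟨le_max_left _ _, max_le zero_le_one (min_le_left _ _)⟩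
  refine ⟨M, le_trans (abs_nonneg _) (hM 0 ⟨le_refl _, zero_le_one⟩), fun x => hM _ (hmem x)⟩

lemma aux_psi_cont (hsmooth : ContDiffOn ℝ 2 φ (Set.Icc 0 1)) : Continuous (psiExt φ) :=
  continuous_iff_continuousAt.2 fun x => (aux_psi_hasDerivAt hsmooth x).continuousAt

lemma aux_deriv_interior (hsmooth : ContDiffOn ℝ 2 φ (Set.Icc 0 1)) {y : ℝ}
    (hy : y ∈ Set.Ioo (0:ℝ) 1) : deriv φ y = dExt φ y := by
  rw [dExt_eq φ ⟨hy.1.le, hy.2.le⟩, dW, derivWithin_of_mem_nhds (Icc_mem_nhds hy.1 hy.2)]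

lemma aux_psi_lip (hsmooth : ContDiffOn ℝ 2 φ (Set.Icc 0 1)) {M : ℝ}
    (hM : ∀ x : ℝ, |dExt φ x| ≤ M) (x y : ℝ) : |psiExt φ y - psiExt φ x| ≤ M * |y - x| := by
  have := Convex.norm_image_sub_le_of_norm_hasDerivWithin_le
    (f := psiExt φ) (f' := dExt φ) (s := Set.univ) (C := M)
    (fun z _ => (aux_psi_hasDerivAt hsmooth z).hasDerivWithinAt)
    (fun z _ => hM z) convex_univ (Set.mem_univ x) (Set.mem_univ y)
  simpa [Real.norm_eq_abs] using this


lemma integrable_dirac' (f : ℝ → ℝ) (a : ℝ) : Integrable f (Measure.dirac a) := by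
  refine Integrable.mono' (integrable_const |f a|) ?_ ?_
  · have : f =ᵐ[Measure.dirac a] fun _ => f a := by
      rw [ae_dirac_eq]; exact Filter.eventually_pure.2 rfl
    exact (stronglyMeasurable_const.aestronglyMeasurable).congr this.symm
  · rw [ae_dirac_eq]; exact Filter.eventually_pure.2 le_rfl

lemma keyH (φ : ℝ → ℝ) (hsmooth : ContDiffOn ℝ 2 φ (Set.Icc 0 1))
    (hmono : MonotoneOn φ (Set.Icc 0 1)) (hmap : Set.MapsTo φ (Set.Icc 0 1) (Set.Icc 0 1))
    (hone : φ 1 = 1) (ρ : ℝ)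
    (hsub : ∀ ν : Measure ℝ, IsProbabilityMeasure ν → (∀ᵐ x ∂ν, x ∈ Set.Icc (0:ℝ) 1) →
      (∫ x, deriv φ (1 - x) ∂ν) * deriv φ (1 - ∫ x, φ (1 - x) ∂ν) ≤ ρ)
    (ν : Measure ℝ) [hνP : IsProbabilityMeasure ν] (hmem : ∀ᵐ x ∂ν, x ∈ Set.Icc (0:ℝ) 1) :
    (∫ x, dExt φ (1 - x) ∂ν) * dExt φ (1 - ∫ x, psiExt φ (1 - x) ∂ν) ≤ ρ := by
  obtain ⟨M, hM0, hM⟩ := aux_bound hsmooth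
  by_cases hcrit : ∃ c₀ ∈ Set.Ioo (0:ℝ) 1, φ c₀ ∈ Set.Ioo (0:ℝ) 1
  ·
    obtain ⟨c₀, hc₀, hφc₀⟩ := hcrit
    set c : ℝ := 1 - c₀ with hc_def
    have hcI : c ∈ Set.Icc (0:ℝ) 1 := ⟨by simp [hc_def]; linarith [hc₀.2], by simp [hc_def]; linarith [hc₀.1]⟩
    set ε : ℕ → ℝ := fun n => 1/((n:ℝ)+2) with hε_def
    have hε0 : ∀ n : ℕ, 0 < ε n := fun n => by positivity
    have hεhalf : ∀ n : ℕ, ε n ≤ 1/2 := fun n => by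
      rw [hε_def]
      rw [div_le_div_iff₀ (by positivity) (by norm_num)]
      have := Nat.cast_nonneg (α := ℝ) n
      linarith
    have hεlim : Tendsto ε atTop (nhds 0) := by
      have h := (tendsto_one_div_add_atTop_nhds_zero_nat (𝕜 := ℝ)).comp (tendsto_add_atTop_nat 1)
      have : ε = (fun n : ℕ => 1/((n:ℝ)+1)) ∘ fun a => a + 1 := by
        funext n
        simp only [hε_def, Function.comp_apply]
        push_cast
        ring_nf
      rw [this]
      exact h
    set A : ℕ → ℝ → ℝ := fun n x => ε n + (1 - 2 * ε n) * x with hA_def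
    have hAmem : ∀ n : ℕ, ∀ x ∈ Set.Icc (0:ℝ) 1, A n x ∈ Set.Icc (ε n) (1 - ε n) := by
      intro n x hx
      have h1 := hεhalf n
      have h2 := hε0 n
      have h3 := hx.1
      have h4 := hx.2
      simp only [hA_def, Set.mem_Icc]
      constructor <;> nlinarith
    have hAIcc : ∀ n : ℕ, ∀ x ∈ Set.Icc (0:ℝ) 1, A n x ∈ Set.Icc (0:ℝ) 1 := by
      intro n x hx
      have h := hAmem n x hx
      constructor <;> [linarith [h.1, (hε0 n).le]; linarith [h.2, (hε0 n).le]]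
    have hin : ∀ n : ℕ, ∀ x : ℝ, x ∈ Set.Icc (ε n) (1 - ε n) → (1 - x) ∈ Set.Ioo (0:ℝ) 1 := by
      intro n x hx
      constructor <;> [linarith [hx.2, hε0 n]; linarith [hx.1, hε0 n]]
    have hAmeas : ∀ n, Measurable (A n) :=
      fun n => measurable_const.add (measurable_id.const_mul _)
    set μ : ℕ → Measure ℝ := fun n => ν.map (A n) with hμ_def
    have hμP : ∀ n, IsProbabilityMeasure (μ n) :=
      fun n => Measure.isProbabilityMeasure_map (hAmeas n).aemeasurable
    have hμIcc : ∀ n, ∀ᵐ x ∂(μ n), x ∈ Set.Icc (ε n) (1 - ε n) := fun n =>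
      (ae_map_iff (hAmeas n).aemeasurable measurableSet_Icc).2
        (hmem.mono fun x hx => hAmem n x hx)
    set e' : ℕ → ENNReal := fun n => ENNReal.ofReal (ε n) with he'_def
    have he'1 : ∀ n, e' n ≤ 1 := fun n => ENNReal.ofReal_le_one.2 (by linarith [hεhalf n])
    have htop1 : ∀ n, (1 - e' n) ≠ ⊤ := fun n => (tsub_le_self.trans_lt ENNReal.one_lt_top).ne
    have htop2 : ∀ n, e' n ≠ ⊤ := fun n => ENNReal.ofReal_ne_top
    have t1 : ∀ n, (1 - e' n).toReal = 1 - ε n := by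
      intro n
      rw [ENNReal.toReal_sub_of_le (he'1 n) ENNReal.one_ne_top]
      simp [he'_def, ENNReal.toReal_ofReal (hε0 n).le]
    have t2 : ∀ n, (e' n).toReal = ε n := fun n => ENNReal.toReal_ofReal (hε0 n).le
    have h1c : (1:ℝ) - c = c₀ := by rw [hc_def]; ring
    -- continuity of integrands
    have hcont1 : ∀ n, Continuous fun x => dExt φ (1 - A n x) := fun n =>
      (aux_dExt_cont hsmooth).comp (by fun_prop)
    have hcont2 : ∀ n, Continuous fun x => psiExt φ (1 - A n x) := fun n =>
      (aux_psi_cont hsmooth).comp (by fun_prop)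
    have hψc : Continuous fun x : ℝ => psiExt φ (1 - x) :=
      (aux_psi_cont hsmooth).comp (by fun_prop)
    have h₁meas : Measurable fun x : ℝ => deriv φ (1 - x) :=
      (measurable_deriv φ).comp (measurable_const.sub measurable_id)
    set K₁ : ℕ → ℝ := fun n => ∫ x, dExt φ (1 - A n x) ∂ν with hK₁_def
    set K₂ : ℕ → ℝ := fun n => ∫ x, psiExt φ (1 - A n x) ∂ν with hK₂_def
    -- integrability
    have hint1 : ∀ n, Integrable (fun x => deriv φ (1 - x)) (μ n) := by
      intro n
      refine Integrable.mono' (integrable_const M) h₁meas.aestronglyMeasurable ?_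
      filter_upwards [hμIcc n] with x hx
      rw [Real.norm_eq_abs, aux_deriv_interior hsmooth (hin n x hx)]
      exact hM _
    have hint2 : ∀ n, Integrable (fun x => psiExt φ (1 - x)) (μ n) := by
      intro n
      refine Integrable.mono' (integrable_const 1) hψc.aestronglyMeasurable ?_
      filter_upwards [hμIcc n] with x hx
      have hxI : (1:ℝ) - x ∈ Set.Icc (0:ℝ) 1 := by
        have := hin n x hx; exact ⟨this.1.le, this.2.le⟩
      rw [Real.norm_eq_abs, psiExt_eq φ hxI]
      have := hmap hxI
      rw [abs_le]
      exact ⟨by linarith [this.1], this.2⟩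
    have hintK₂ : ∀ n, Integrable (fun x => psiExt φ (1 - A n x)) ν := by
      intro n
      refine Integrable.mono' (integrable_const 1) (hcont2 n).aestronglyMeasurable ?_
      filter_upwards [hmem] with x hx
      have hxI : (1:ℝ) - A n x ∈ Set.Icc (0:ℝ) 1 := by
        have := hin n _ (hAmem n x hx); exact ⟨this.1.le, this.2.le⟩
      rw [Real.norm_eq_abs, psiExt_eq φ hxI]
      have := hmap hxI
      rw [abs_le]
      exact ⟨by linarith [this.1], this.2⟩
    have hK₂mem : ∀ n, K₂ n ∈ Set.Icc (0:ℝ) 1 := by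
      intro n
      constructor
      · refine integral_nonneg_of_ae ?_
        filter_upwards [hmem] with x hx
        have hxI : (1:ℝ) - A n x ∈ Set.Icc (0:ℝ) 1 := by
          have := hin n _ (hAmem n x hx); exact ⟨this.1.le, this.2.le⟩
        rw [psiExt_eq φ hxI]
        exact (hmap hxI).1
      · have hm := integral_mono_ae (hintK₂ n) (integrable_const 1) ?_
        · simpa using hm
        · filter_upwards [hmem] with x hx
          have hxI : (1:ℝ) - A n x ∈ Set.Icc (0:ℝ) 1 := by
            have := hin n _ (hAmem n x hx); exact ⟨this.1.le, this.2.le⟩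
          rw [psiExt_eq φ hxI]
          exact (hmap hxI).2
    -- the subcriticality inequality for the approximating measures
    have hQ : ∀ n : ℕ, ((1 - ε n) * K₁ n + ε n * dExt φ c₀) *
        dExt φ (1 - ((1 - ε n) * K₂ n + ε n * φ c₀)) ≤ ρ := by
      intro n
      haveI := hμP n
      set mn : Measure ℝ := (1 - e' n) • μ n + e' n • Measure.dirac c with hmn_def
      have hPm : IsProbabilityMeasure mn := by
        constructor
        rw [hmn_def]
        haveI := hμP n
        simp only [Measure.coe_add, Pi.add_apply, Measure.smul_apply, smul_eq_mul,
          measure_univ, mul_one]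
        exact tsub_add_cancel_of_le (he'1 n)
      have hmem' : ∀ᵐ x ∂mn, x ∈ Set.Icc (0:ℝ) 1 := by
        rw [hmn_def, ae_add_measure_iff]
        constructor
        · exact Measure.ae_smul_measure
            ((ae_map_iff (hAmeas n).aemeasurable measurableSet_Icc).2
              (hmem.mono fun x hx => hAIcc n x hx)) _
        · refine Measure.ae_smul_measure ?_ _
          rw [ae_dirac_eq]
          exact Filter.eventually_pure.2 hcI
      have hs := hsub mn hPm hmem'
      have e1 : ∫ x, deriv φ (1 - x) ∂mn = (1 - ε n) * K₁ n + ε n * dExt φ c₀ := by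
        rw [hmn_def, integral_add_measure ((hint1 n).smul_measure (htop1 n))
            ((integrable_dirac' _ c).smul_measure (htop2 n)),
          integral_smul_measure, integral_smul_measure,
          integral_dirac (fun x => deriv φ (1 - x)) c]
        have hμeval : ∫ x, deriv φ (1 - x) ∂(μ n) = K₁ n := by
          rw [hμ_def]
          rw [integral_map (hAmeas n).aemeasurable h₁meas.aestronglyMeasurable]
          refine integral_congr_ae ?_
          filter_upwards [hmem] with x hx
          rw [aux_deriv_interior hsmooth (hin n _ (hAmem n x hx))]
        rw [hμeval, t1, t2, smul_eq_mul, smul_eq_mul, h1c,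
          aux_deriv_interior hsmooth hc₀]
      have e2 : ∫ x, φ (1 - x) ∂mn = (1 - ε n) * K₂ n + ε n * φ c₀ := by
        have estep : ∫ x, φ (1 - x) ∂mn = ∫ x, psiExt φ (1 - x) ∂mn := by
          refine integral_congr_ae ?_
          filter_upwards [hmem'] with x hx
          rw [psiExt_eq φ ⟨by linarith [hx.2], by linarith [hx.1]⟩]
        rw [estep, hmn_def, integral_add_measure ((hint2 n).smul_measure (htop1 n))
            ((integrable_dirac' _ c).smul_measure (htop2 n)),
          integral_smul_measure, integral_smul_measure,
          integral_dirac (fun x => psiExt φ (1 - x)) c]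
        have hμeval : ∫ x, psiExt φ (1 - x) ∂(μ n) = K₂ n := by
          rw [hμ_def]
          rw [integral_map (hAmeas n).aemeasurable hψc.aestronglyMeasurable]
        rw [hμeval, t1, t2, smul_eq_mul, smul_eq_mul, h1c,
          psiExt_eq φ ⟨hc₀.1.le, hc₀.2.le⟩]
      have harg : 1 - ((1 - ε n) * K₂ n + ε n * φ c₀) ∈ Set.Ioo (0:ℝ) 1 := by
        have h1 := (hK₂mem n).1
        have h2 := (hK₂mem n).2
        constructor <;> nlinarith [hε0 n, hεhalf n, hφc₀.1, hφc₀.2]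
      rw [e1, e2, aux_deriv_interior hsmooth harg] at hs
      exact hs
    -- pass to the limit
    have hAx : ∀ x : ℝ, Tendsto (fun n => 1 - A n x) atTop (nhds (1 - x)) := by
      intro x
      have h := (hεlim.add (((hεlim.const_mul 2).const_sub 1).mul_const x)).const_sub 1
      have he : (1:ℝ) - (0 + (1 - 2*0) * x) = 1 - x := by ring
      rw [he] at h
      exact h
    have hK₁lim : Tendsto K₁ atTop (nhds (∫ x, dExt φ (1 - x) ∂ν)) := by
      refine tendsto_integral_of_dominated_convergence (fun _ => M)
        (fun n => (hcont1 n).aestronglyMeasurable) (integrable_const M)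
        (fun n => Filter.Eventually.of_forall fun x => hM _)
        (Filter.Eventually.of_forall fun x => ?_)
      exact ((aux_dExt_cont hsmooth).tendsto (1 - x)).comp (hAx x)
    have hK₂lim : Tendsto K₂ atTop (nhds (∫ x, psiExt φ (1 - x) ∂ν)) := by
      refine tendsto_integral_of_dominated_convergence (fun _ => 1)
        (fun n => (hcont2 n).aestronglyMeasurable) (integrable_const 1) (fun n => ?_)
        (Filter.Eventually.of_forall fun x =>
          ((aux_psi_cont hsmooth).tendsto (1 - x)).comp (hAx x))
      filter_upwards [hmem] with x hx
      have hxI : (1:ℝ) - A n x ∈ Set.Icc (0:ℝ) 1 := by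
        have := hin n _ (hAmem n x hx); exact ⟨this.1.le, this.2.le⟩
      rw [Real.norm_eq_abs, psiExt_eq φ hxI]
      have := hmap hxI
      rw [abs_le]
      exact ⟨by linarith [this.1], this.2⟩
    have f1 : Tendsto (fun n => (1 - ε n) * K₁ n + ε n * dExt φ c₀) atTop
        (nhds (∫ x, dExt φ (1 - x) ∂ν)) := by
      have h := (((tendsto_const_nhds (x := (1:ℝ))).sub hεlim).mul hK₁lim).add
        (hεlim.mul_const (dExt φ c₀))
      have he : ((1:ℝ) - 0) * (∫ x, dExt φ (1 - x) ∂ν) + 0 * dExt φ c₀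
          = ∫ x, dExt φ (1 - x) ∂ν := by ring
      rw [he] at h
      exact h
    have f2 : Tendsto (fun n => dExt φ (1 - ((1 - ε n) * K₂ n + ε n * φ c₀))) atTop
        (nhds (dExt φ (1 - ∫ x, psiExt φ (1 - x) ∂ν))) := by
      have harg : Tendsto (fun n => 1 - ((1 - ε n) * K₂ n + ε n * φ c₀)) atTop
          (nhds (1 - ∫ x, psiExt φ (1 - x) ∂ν)) := by
        have h := ((((tendsto_const_nhds (x := (1:ℝ))).sub hεlim).mul hK₂lim).add
          (hεlim.mul_const (φ c₀))).const_sub 1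
        have he : (1:ℝ) - (((1:ℝ) - 0) * (∫ x, psiExt φ (1 - x) ∂ν) + 0 * φ c₀)
            = 1 - ∫ x, psiExt φ (1 - x) ∂ν := by ring
        rw [he] at h
        exact h
      exact ((aux_dExt_cont hsmooth).tendsto _).comp harg
    exact le_of_tendsto (f1.mul f2) (Filter.Eventually.of_forall hQ)

  · -- degenerate case : φ ≡ 1 on Icc 0 1
    push_neg at hcrit
    have hval : ∀ x ∈ Set.Ioo (0:ℝ) 1, φ x = 1 := by
      intro x hx
      by_contra hne
      have hxI : x ∈ Set.Icc (0:ℝ) 1 := ⟨hx.1.le, hx.2.le⟩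
      have hφxI := hmap hxI
      have hφx0 : φ x = 0 := by
        have h := hcrit x hx
        rw [Set.mem_Ioo] at h
        push_neg at h
        by_cases hp : 0 < φ x
        · exact absurd (le_antisymm hφxI.2 (h hp)) hne
        · linarith [hφxI.1]
      have hic := intermediate_value_Icc hx.2.le
        ((hsmooth.continuousOn).mono (Set.Icc_subset_Icc hx.1.le le_rfl))
      have h12 : (1/2 : ℝ) ∈ Set.Icc (φ x) (φ 1) := by
        rw [hφx0, hone]; constructor <;> norm_num
      obtain ⟨y, hyI, hy⟩ := hic h12
      have hyIoo : y ∈ Set.Ioo (0:ℝ) 1 := by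
        constructor
        · linarith [hyI.1, hx.1]
        · rcases lt_or_eq_of_le hyI.2 with h | h
          · exact h
          · exfalso; rw [h, hone] at hy; norm_num at hy
      exact absurd (by rw [hy]; constructor <;> norm_num) (hcrit y hyIoo)
    have hφ0 : φ 0 = 1 := by
      have hnb : (nhdsWithin (0:ℝ) (Set.Ioc 0 1)).NeBot := by
        rw [nhdsWithin_Ioc_eq_nhdsGT one_pos]; exact nhdsGT_neBot 0
      have t1 : Tendsto φ (nhdsWithin 0 (Set.Ioc 0 1)) (nhds (φ 0)) :=
        (hsmooth.continuousOn 0 ⟨le_rfl, zero_le_one⟩).mono Set.Ioc_subset_Icc_self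
      have t2 : Tendsto φ (nhdsWithin 0 (Set.Ioc 0 1)) (nhds 1) := by
        refine Tendsto.congr' ?_ tendsto_const_nhds
        filter_upwards [self_mem_nhdsWithin] with y hy
        rcases lt_or_eq_of_le hy.2 with h | h
        · exact (hval y ⟨hy.1, h⟩).symm
        · rw [h, hone]
      exact tendsto_nhds_unique t1 t2
    have hall : ∀ x ∈ Set.Icc (0:ℝ) 1, φ x = 1 := by
      intro x hx
      rcases eq_or_lt_of_le hx.1 with h | h
      · rw [← h]; exact hφ0
      rcases eq_or_lt_of_le hx.2 with h' | h'
      · rw [h']; exact hone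
      exact hval x ⟨h, h'⟩
    have hDzero : ∀ x ∈ Set.Icc (0:ℝ) 1, dW φ x = 0 := by
      intro x hx
      rw [dW, derivWithin_congr hall (hall x hx)]
      exact congrFun (derivWithin_const (Set.Icc (0:ℝ) 1) (1:ℝ)) x
    have hρ0 : (0:ℝ) ≤ ρ := by
      have hae : ∀ᵐ x ∂(Measure.dirac (1/2:ℝ)), x ∈ Set.Icc (0:ℝ) 1 := by
        rw [ae_dirac_eq]
        refine Filter.eventually_pure.2 ?_
        constructor <;> norm_num
      have hs := hsub _ inferInstance hae
      rw [integral_dirac (fun x => deriv φ (1 - x)) (1/2:ℝ)] at hs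
      have hd12 : deriv φ (1 - (1/2:ℝ)) = 0 := by
        have heq : φ =ᶠ[nhds (1 - (1/2:ℝ))] fun _ => (1:ℝ) := by
          filter_upwards [Icc_mem_nhds (by norm_num : (0:ℝ) < 1 - 1/2)
            (by norm_num : (1:ℝ) - 1/2 < 1)] with y hy
          exact hall y hy
        rw [heq.deriv_eq, deriv_const]
      rw [hd12, zero_mul] at hs
      exact hs
    have hz : ∫ x, dExt φ (1 - x) ∂ν = 0 := by
      rw [← integral_zero ℝ ℝ (μ := ν)]
      refine integral_congr_ae ?_
      filter_upwards [hmem] with x hx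
      rw [dExt_eq φ (by constructor <;> [linarith [hx.2]; linarith [hx.1]])]
      exact hDzero _ (by constructor <;> [linarith [hx.2]; linarith [hx.1]])
    rw [hz, zero_mul]
    exact hρ0

end aux

section mainaux
variable {ω : MeasureTheory.Measure ℝ} [IsProbabilityMeasure ω]

lemma auxB_int {f : ℝ → ℝ} (hf : Monotone f) (hfr : ∀ x, f x ∈ Set.Icc (0:ℝ) 1) (w t : ℝ) :
    Integrable (fun w' => f (w' - w + t)) ω := by
  have hm : Monotone fun w' : ℝ => f (w' - w + t) :=
    fun a b hab => hf (by linarith)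
  refine Integrable.mono' (integrable_const 1) hm.measurable.aestronglyMeasurable ?_
  refine Filter.Eventually.of_forall fun w' => ?_
  rw [Real.norm_eq_abs, abs_le]
  have := hfr (w' - w + t)
  exact ⟨by linarith [this.1], this.2⟩

lemma auxB_mem {f : ℝ → ℝ} (hf : Monotone f) (hfr : ∀ x, f x ∈ Set.Icc (0:ℝ) 1) (w t : ℝ) :
    (∫ w', f (w' - w + t) ∂ω) ∈ Set.Icc (0:ℝ) 1 := by
  constructor
  · exact integral_nonneg fun w' => (hfr _).1
  · have := integral_mono (μ := ω) (auxB_int hf hfr w t) (integrable_const 1) fun w' => (hfr _).2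
    simpa using this

lemma auxB_anti {f : ℝ → ℝ} (hf : Monotone f) (hfr : ∀ x, f x ∈ Set.Icc (0:ℝ) 1) (t : ℝ) :
    Antitone fun w => ∫ w', f (w' - w + t) ∂ω := by
  intro a b hab
  exact integral_mono (auxB_int hf hfr b t) (auxB_int hf hfr a t)
    fun w' => hf (by linarith)

end mainaux



/-- Under the uniform subcriticality condition with constant `ρ < 1`, the belief-propagation
operator `T f t = φ̂(1 - E_W[φ̂(1 - E_{W'}[f(W'-W+t)])])` is a `ρ`-contraction for the sup
distance on increasing càdlàg functions `ℝ → [0,1]`. -/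
theorem stmt_18 (φhat : ℝ → ℝ)
    (hsmooth : ContDiffOn ℝ 2 φhat (Set.Icc 0 1))
    (hmono : MonotoneOn φhat (Set.Icc 0 1))
    (hmap : Set.MapsTo φhat (Set.Icc 0 1) (Set.Icc 0 1))
    (hone : φhat 1 = 1)
    (ρ : ℝ) (hρ : ρ < 1)
    (hsub : ∀ ν : Measure ℝ, IsProbabilityMeasure ν → (∀ᵐ x ∂ν, x ∈ Set.Icc (0 : ℝ) 1) →
      (∫ x, deriv φhat (1 - x) ∂ν) * deriv φhat (1 - ∫ x, φhat (1 - x) ∂ν) ≤ ρ)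
    (ω : Measure ℝ) [IsProbabilityMeasure ω]
    (T : (ℝ → ℝ) → (ℝ → ℝ))
    (hT : ∀ f t, T f t = φhat (1 - ∫ w, φhat (1 - ∫ w', f (w' - w + t) ∂ω) ∂ω))
    (f f' : ℝ → ℝ)
    (hf : Monotone f) (hf' : Monotone f')
    (hfr : ∀ t, f t ∈ Set.Icc (0 : ℝ) 1) (hf'r : ∀ t, f' t ∈ Set.Icc (0 : ℝ) 1)
    (hfc : ∀ t, ContinuousWithinAt f (Set.Ici t) t)
    (hf'c : ∀ t, ContinuousWithinAt f' (Set.Ici t) t) :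
    (⨆ t : ℝ, |T f t - T f' t|) ≤ ρ * ⨆ t : ℝ, |f t - f' t| := by
  classical
  have hBdd : BddAbove (Set.range fun t : ℝ => |f t - f' t|) := by
    refine ⟨2, ?_⟩
    rintro y ⟨x, rfl⟩
    have h1 := hfr x; have h2 := hf'r x
    rw [abs_le]
    exact ⟨by linarith [h1.1, h2.2], by linarith [h1.2, h2.1]⟩
  set d : ℝ := ⨆ t : ℝ, |f t - f' t| with hd_def
  have hpt : ∀ x : ℝ, |f x - f' x| ≤ d := fun x => le_ciSup hBdd x
  have hd0 : (0:ℝ) ≤ d := le_trans (abs_nonneg _) (hpt 0)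
  obtain ⟨M, hM0, hM⟩ := aux_bound hsmooth
  refine ciSup_le fun t => ?_
  -- the inner integrals
  set B : ℝ → ℝ := fun w => ∫ w', f (w' - w + t) ∂ω with hB_def
  set B' : ℝ → ℝ := fun w => ∫ w', f' (w' - w + t) ∂ω with hB'_def
  have hBmem : ∀ w, B w ∈ Set.Icc (0:ℝ) 1 := fun w => auxB_mem hf hfr w t
  have hB'mem : ∀ w, B' w ∈ Set.Icc (0:ℝ) 1 := fun w => auxB_mem hf' hf'r w t
  have hBmeas : Measurable B := (auxB_anti hf hfr t).measurable
  have hB'meas : Measurable B' := (auxB_anti hf' hf'r t).measurable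
  have hG : ∀ w, |B w - B' w| ≤ d := by
    intro w
    have hsub' : B w - B' w = ∫ w', (f (w' - w + t) - f' (w' - w + t)) ∂ω :=
      (integral_sub (auxB_int hf hfr w t) (auxB_int hf' hf'r w t)).symm
    rw [hsub']
    have := norm_integral_le_of_norm_le_const (μ := ω) (C := d)
      (f := fun w' => f (w' - w + t) - f' (w' - w + t))
      (Filter.Eventually.of_forall fun w' => by rw [Real.norm_eq_abs]; exact hpt _)
    simpa using this
  have hG1 : ∀ w, |B w - B' w| ≤ 1 := by
    intro w
    have h1 := hBmem w; have h2 := hB'mem w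
    rw [abs_le]
    exact ⟨by linarith [h1.1, h2.2], by linarith [h1.2, h2.1]⟩
  -- the interpolation path
  set ξ : ℝ → ℝ → ℝ := fun s w => B' w + s * (B w - B' w) with hξ_def
  have hξmeas : ∀ s, Measurable fun w => ξ s w :=
    fun s => hB'meas.add ((hBmeas.sub hB'meas).const_mul s)
  have hξmem : ∀ s ∈ Set.Icc (0:ℝ) 1, ∀ w, ξ s w ∈ Set.Icc (0:ℝ) 1 := by
    intro s hs w
    have h1 := hBmem w; have h2 := hB'mem w
    simp only [hξ_def, Set.mem_Icc]
    constructor <;> nlinarith [hs.1, hs.2, h1.1, h1.2, h2.1, h2.2]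
  set g : ℝ → ℝ := fun s => ∫ w, psiExt φhat (1 - ξ s w) ∂ω with hg_def
  set gd : ℝ → ℝ := fun s => ∫ w, dExt φhat (1 - ξ s w) * -(B w - B' w) ∂ω with hgd_def
  have hξin_meas : ∀ s : ℝ, Measurable fun w => (1:ℝ) - ξ s w :=
    fun s => measurable_const.sub (hξmeas s)
  have hFmeas : ∀ s : ℝ, AEStronglyMeasurable (fun w => psiExt φhat (1 - ξ s w)) ω :=
    fun s => ((aux_psi_cont hsmooth).measurable.comp (hξin_meas s)).aestronglyMeasurable
  have hF'meas : ∀ s : ℝ, AEStronglyMeasurable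
      (fun w => dExt φhat (1 - ξ s w) * -(B w - B' w)) ω := fun s =>
    (((aux_dExt_cont hsmooth).measurable.comp (hξin_meas s)).mul
      (hBmeas.sub hB'meas).neg).aestronglyMeasurable
  have hFint : ∀ s : ℝ, Integrable (fun w => psiExt φhat (1 - ξ s w)) ω := by
    intro s
    refine Integrable.mono' (integrable_const (|psiExt φhat 0| + M * (2 + |s|)))
      (hFmeas s) (Filter.Eventually.of_forall fun w => ?_)
    have h1 : |1 - ξ s w| ≤ 2 + |s| := by
      have hb := hBmem w; have hb' := hB'mem w
      have hG1w := hG1 w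
      have hs1 : -|s| ≤ s := neg_abs_le s
      have hs2 : s ≤ |s| := le_abs_self s
      have habs : |s * (B w - B' w)| ≤ |s| := by
        rw [abs_mul]
        calc |s| * |B w - B' w| ≤ |s| * 1 :=
          mul_le_mul_of_nonneg_left (hG1 w) (abs_nonneg s)
        _ = |s| := mul_one _
      simp only [hξ_def]
      rw [abs_le]
      constructor
      · have := (abs_le.1 habs).2
        nlinarith [hb'.1, hb'.2]
      · have := (abs_le.1 habs).1
        nlinarith [hb'.1, hb'.2]
    have h2 := aux_psi_lip hsmooth hM 0 (1 - ξ s w)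
    rw [sub_zero] at h2
    have h3 : |psiExt φhat (1 - ξ s w)| - |psiExt φhat 0| ≤
        |psiExt φhat (1 - ξ s w) - psiExt φhat 0| := abs_sub_abs_le_abs_sub _ _
    have h4 : M * |1 - ξ s w| ≤ M * (2 + |s|) := mul_le_mul_of_nonneg_left h1 hM0
    rw [Real.norm_eq_abs]
    linarith
  have hdExtInt : ∀ s : ℝ, Integrable (fun w => dExt φhat (1 - ξ s w)) ω := by
    intro s
    refine Integrable.mono' (integrable_const M)
      ((aux_dExt_cont hsmooth).measurable.comp (hξin_meas s)).aestronglyMeasurable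
      (Filter.Eventually.of_forall fun w => ?_)
    rw [Real.norm_eq_abs]
    exact hM _
  -- differentiation under the integral sign
  have hgder : ∀ s₀ : ℝ, Integrable (fun w => dExt φhat (1 - ξ s₀ w) * -(B w - B' w)) ω ∧
      HasDerivAt g (gd s₀) s₀ := by
    intro s₀
    have H := hasDerivAt_integral_of_dominated_loc_of_deriv_le (μ := ω) (𝕜 := ℝ)
      (F := fun s w => psiExt φhat (1 - ξ s w))
      (F' := fun s w => dExt φhat (1 - ξ s w) * -(B w - B' w))
      (x₀ := s₀) (bound := fun _ => M * 2) (Metric.ball_mem_nhds s₀ one_pos)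
      (Filter.Eventually.of_forall fun s => hFmeas s) (hFint s₀) (hF'meas s₀)
      ?_ (integrable_const _) ?_
    · exact ⟨H.1, H.2⟩
    · refine Filter.Eventually.of_forall fun w => fun s _ => ?_
      rw [Real.norm_eq_abs, abs_mul, abs_neg]
      have h1 : |B w - B' w| ≤ 2 := by
        have h1 := hBmem w; have h2 := hB'mem w
        rw [abs_le]
        exact ⟨by linarith [h1.1, h2.2], by linarith [h1.2, h2.1]⟩
      exact mul_le_mul (hM _) h1 (abs_nonneg _) hM0
    · refine Filter.Eventually.of_forall fun w => fun s _ => ?_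
      have hinner : HasDerivAt (fun s : ℝ => 1 - (B' w + s * (B w - B' w)))
          (-(B w - B' w)) s := by
        simpa using ((hasDerivAt_mul_const (B w - B' w)).const_add (B' w)).const_sub 1
      have := (aux_psi_hasDerivAt hsmooth (1 - ξ s w)).comp s hinner
      simpa [Function.comp_def, hξ_def] using this
  -- membership of g
  have hgmem : ∀ s ∈ Set.Icc (0:ℝ) 1, g s ∈ Set.Icc (0:ℝ) 1 := by
    intro s hs
    constructor
    · refine integral_nonneg fun w => ?_
      have hx : (1:ℝ) - ξ s w ∈ Set.Icc (0:ℝ) 1 := by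
        have := hξmem s hs w; exact ⟨by linarith [this.2], by linarith [this.1]⟩
      rw [psiExt_eq φhat hx]
      exact (hmap hx).1
    · have := integral_mono (μ := ω) (hFint s) (integrable_const 1) (fun w => ?_)
      · simpa using this
      · have hx : (1:ℝ) - ξ s w ∈ Set.Icc (0:ℝ) 1 := by
          have := hξmem s hs w; exact ⟨by linarith [this.2], by linarith [this.1]⟩
        rw [psiExt_eq φhat hx]
        exact (hmap hx).2
  -- the derivative bound coming from subcriticality
  set F : ℝ → ℝ := fun s => psiExt φhat (1 - g s) with hF_def
  have hFder : ∀ s : ℝ, HasDerivAt F (dExt φhat (1 - g s) * -(gd s)) s := by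
    intro s
    have hinner : HasDerivAt (fun s => 1 - g s) (-(gd s)) s := (hgder s).2.const_sub 1
    have := (aux_psi_hasDerivAt hsmooth (1 - g s)).comp s hinner
    simpa [Function.comp_def, hF_def] using this
  have hbound : ∀ s ∈ Set.Icc (0:ℝ) 1, ‖dExt φhat (1 - g s) * -(gd s)‖ ≤ ρ * d := by
    intro s hs
    have hx : ∀ w, (1:ℝ) - ξ s w ∈ Set.Icc (0:ℝ) 1 := fun w => by
      have := hξmem s hs w; exact ⟨by linarith [this.2], by linarith [this.1]⟩
    have hgx : (1:ℝ) - g s ∈ Set.Icc (0:ℝ) 1 := by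
      have := hgmem s hs; exact ⟨by linarith [this.2], by linarith [this.1]⟩
    -- apply the key lemma to the pushforward measure
    have hkey : (∫ w, dExt φhat (1 - ξ s w) ∂ω) * dExt φhat (1 - g s) ≤ ρ := by
      haveI : IsProbabilityMeasure (ω.map fun w => ξ s w) :=
        Measure.isProbabilityMeasure_map (hξmeas s).aemeasurable
      have hmemν : ∀ᵐ x ∂(ω.map fun w => ξ s w), x ∈ Set.Icc (0:ℝ) 1 :=
        (ae_map_iff (hξmeas s).aemeasurable measurableSet_Icc).2
          (Filter.Eventually.of_forall (hξmem s hs))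
      have hk := keyH φhat hsmooth hmono hmap hone ρ hsub _ hmemν
      have hm1 : AEStronglyMeasurable (fun x : ℝ => dExt φhat (1 - x))
          (ω.map fun w => ξ s w) :=
        ((aux_dExt_cont hsmooth).comp (continuous_const.sub continuous_id)).aestronglyMeasurable
      have hm2 : AEStronglyMeasurable (fun x : ℝ => psiExt φhat (1 - x))
          (ω.map fun w => ξ s w) :=
        ((aux_psi_cont hsmooth).comp (continuous_const.sub continuous_id)).aestronglyMeasurable
      rw [integral_map (hξmeas s).aemeasurable hm1,
        integral_map (hξmeas s).aemeasurable hm2] at hk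
      exact hk
    have hInonneg : (0:ℝ) ≤ ∫ w, dExt φhat (1 - ξ s w) ∂ω :=
      integral_nonneg fun w => aux_dExt_nonneg hsmooth hmono (hx w)
    have hD2 : (0:ℝ) ≤ dExt φhat (1 - g s) := aux_dExt_nonneg hsmooth hmono hgx
    have hgdb : |gd s| ≤ (∫ w, dExt φhat (1 - ξ s w) ∂ω) * d := by
      rw [hgd_def]
      have h1 : ‖∫ w, dExt φhat (1 - ξ s w) * -(B w - B' w) ∂ω‖ ≤
          ∫ w, ‖dExt φhat (1 - ξ s w) * -(B w - B' w)‖ ∂ω := norm_integral_le_integral_norm _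
      have h2 : ∫ w, ‖dExt φhat (1 - ξ s w) * -(B w - B' w)‖ ∂ω ≤
          ∫ w, dExt φhat (1 - ξ s w) * d ∂ω := by
        refine integral_mono ((hgder s).1.norm) ((hdExtInt s).mul_const d) fun w => ?_
        rw [Real.norm_eq_abs, abs_mul, abs_neg,
          abs_of_nonneg (aux_dExt_nonneg hsmooth hmono (hx w))]
        exact mul_le_mul_of_nonneg_left (hG w) (aux_dExt_nonneg hsmooth hmono (hx w))
      rw [integral_mul_const] at h2
      calc |gd s| = ‖∫ w, dExt φhat (1 - ξ s w) * -(B w - B' w) ∂ω‖ := by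
            rw [hgd_def, Real.norm_eq_abs]
        _ ≤ _ := le_trans h1 h2
    rw [Real.norm_eq_abs, abs_mul, abs_neg, abs_of_nonneg hD2]
    nlinarith [mul_le_mul_of_nonneg_left hgdb hD2, mul_le_mul_of_nonneg_right hkey hd0]
  -- mean value inequality
  have hmain := Convex.norm_image_sub_le_of_norm_hasDerivWithin_le
    (f := F) (f' := fun s => dExt φhat (1 - g s) * -(gd s)) (s := Set.Icc (0:ℝ) 1)
    (fun s hs => (hFder s).hasDerivWithinAt) hbound (convex_Icc 0 1)
    (Set.left_mem_Icc.2 zero_le_one) (Set.right_mem_Icc.2 zero_le_one)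
  -- identify the endpoints
  have hTf : T f t = F 1 := by
    have hg1 : g 1 = ∫ w, φhat (1 - ∫ w', f (w' - w + t) ∂ω) ∂ω := by
      refine integral_congr_ae (Filter.Eventually.of_forall fun w => ?_)
      show psiExt φhat (1 - ξ 1 w) = φhat (1 - ∫ w', f (w' - w + t) ∂ω)
      have hxi : ξ 1 w = B w := by show B' w + 1 * (B w - B' w) = B w; ring
      rw [hxi]
      have hx : (1:ℝ) - B w ∈ Set.Icc (0:ℝ) 1 := by
        have := hBmem w; exact ⟨by linarith [this.2], by linarith [this.1]⟩
      exact psiExt_eq φhat hx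
    have hgx : (1:ℝ) - g 1 ∈ Set.Icc (0:ℝ) 1 := by
      have := hgmem 1 (Set.right_mem_Icc.2 zero_le_one)
      exact ⟨by linarith [this.2], by linarith [this.1]⟩
    rw [hT f t]
    have hF1 : F 1 = psiExt φhat (1 - g 1) := rfl
    rw [hF1, psiExt_eq φhat hgx, hg1]
  have hTf' : T f' t = F 0 := by
    have hg0 : g 0 = ∫ w, φhat (1 - ∫ w', f' (w' - w + t) ∂ω) ∂ω := by
      refine integral_congr_ae (Filter.Eventually.of_forall fun w => ?_)
      show psiExt φhat (1 - ξ 0 w) = φhat (1 - ∫ w', f' (w' - w + t) ∂ω)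
      have hxi : ξ 0 w = B' w := by show B' w + 0 * (B w - B' w) = B' w; ring
      rw [hxi]
      have hx : (1:ℝ) - B' w ∈ Set.Icc (0:ℝ) 1 := by
        have := hB'mem w; exact ⟨by linarith [this.2], by linarith [this.1]⟩
      exact psiExt_eq φhat hx
    have hgx : (1:ℝ) - g 0 ∈ Set.Icc (0:ℝ) 1 := by
      have := hgmem 0 (Set.left_mem_Icc.2 zero_le_one)
      exact ⟨by linarith [this.2], by linarith [this.1]⟩
    rw [hT f' t]
    have hF0 : F 0 = psiExt φhat (1 - g 0) := rfl
    rw [hF0, psiExt_eq φhat hgx, hg0]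
  rw [hTf, hTf']
  have : ‖F 1 - F 0‖ ≤ ρ * d * ‖(1:ℝ) - 0‖ := hmain
  rw [Real.norm_eq_abs] at this
  simpa using this
end
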